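/- arXiv:2005.04371 — 3 statements merged into one kernel-verified Lean document; each statement's English description precedes it below -/
import Mathlib

section
/- There exists a constant C > 0 such that for every n ≥ 0, every choice of pairwise distinct positive integers k_1, …, k_n, k_{n+1}, and all positive integers r_1, …, r_n, r, one has λ({x ∈ (0,1) irrational : a_{k_1}(x) = r_1, …, a_{k_n}(x) = r_n, a_{k_{n+1}}(x) = r}) ≤ (C/r²) · λ({x ∈ (0,1) irrational : a_{k_1}(x) = r_1, …, a_{k_n}(x) = r_n}). -/
open MeasureTheory Filter Real
open scoped ENNReal NNReal

/-- The Gauss map `G(y) = 1/y - ⌊1/y⌋` (with `G 0 = 0`). -/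
noncomputable def gaussMap (y : ℝ) : ℝ := Int.fract (1 / y)

/-- The `n`-th regular continued fraction digit `a_n(x) = ⌊1 / G^{n-1}(x)⌋`. -/
noncomputable def rcfDigit (x : ℝ) (n : ℕ) : ℕ := (⌊1 / gaussMap^[n - 1] x⌋).toNat

namespace RcfAux

/-- irrational points of (0,1) -/
def X : Set ℝ := {x | x ∈ Set.Ioo (0:ℝ) 1 ∧ Irrational x}

lemma measurableSet_irrational : MeasurableSet {x : ℝ | Irrational x} := by
  have : {x : ℝ | Irrational x} = (Set.range ((↑) : ℚ → ℝ))ᶜ := rfl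
  rw [this]
  exact ((Set.countable_range _).measurableSet).compl

lemma measurableSet_X : MeasurableSet X :=
  measurableSet_Ioo.inter measurableSet_irrational

lemma volume_X : volume X = 1 := by
  have h1 : volume (Set.Ioo (0:ℝ) 1) = 1 := by simp
  have h2 : volume (Set.Ioo (0:ℝ) 1 \ X) = 0 := by
    have : Set.Ioo (0:ℝ) 1 \ X ⊆ Set.range ((↑) : ℚ → ℝ) := by
      intro x hx
      by_contra h
      exact hx.2 ⟨hx.1, h⟩
    exact measure_mono_null this ((Set.countable_range ((↑) : ℚ → ℝ)).measure_zero volume)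
  have := measure_diff_add_inter (μ := volume) (Set.Ioo (0:ℝ) 1) measurableSet_X
  have hXsub : X ⊆ Set.Ioo (0:ℝ) 1 := fun x hx => hx.1
  have hinter : Set.Ioo (0:ℝ) 1 ∩ X = X := Set.inter_eq_self_of_subset_right hXsub
  rw [hinter, h2, zero_add] at this
  rw [this, h1]

lemma measurable_gaussMap : Measurable gaussMap := by
  unfold gaussMap
  exact measurable_fract.comp (measurable_const.div measurable_id)

lemma measurable_rcfDigit (n : ℕ) : Measurable fun x => rcfDigit x n := by
  unfold rcfDigit
  have h1 : Measurable fun x : ℝ => (⌊1 / gaussMap^[n - 1] x⌋ : ℤ) :=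
    Int.measurable_floor.comp (measurable_const.div (measurable_gaussMap.iterate (n-1)))
  exact (measurable_from_top (f := Int.toNat)).comp h1


lemma mem_X_iff {x : ℝ} : x ∈ X ↔ (0 < x ∧ x < 1) ∧ Irrational x := by
  simp [X, Set.mem_Ioo]

lemma X_step {x : ℝ} (hx : x ∈ X) :
    gaussMap x ∈ X ∧ (rcfDigit x 1 : ℝ) + gaussMap x = 1/x ∧ 1 ≤ rcfDigit x 1 := by
  obtain ⟨⟨hx0, hx1⟩, hxi⟩ := hx
  have hinv_irr : Irrational (1/x) := by
    rw [one_div]; exact hxi.inv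
  have h1x : 1 < 1/x := by rw [lt_div_iff₀ hx0]; linarith
  have hfloor1 : (1:ℤ) ≤ ⌊1/x⌋ := by
    rw [Int.le_floor]; exact_mod_cast h1x.le
  have hG_irr : Irrational (gaussMap x) := by
    unfold gaussMap
    rw [Int.fract]
    exact hinv_irr.sub_intCast _
  have hGne : gaussMap x ≠ 0 := fun hh => (hG_irr.ne_int 0) (by simpa using hh)
  have hG0 : 0 < gaussMap x :=
    lt_of_le_of_ne (Int.fract_nonneg (1/x)) (Ne.symm hGne)
  have hG1 : gaussMap x < 1 := Int.fract_lt_one _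
  have hd : (rcfDigit x 1 : ℝ) = (⌊1/x⌋ : ℝ) := by
    unfold rcfDigit
    simp only [Nat.sub_self, Function.iterate_zero, id_eq]
    have := Int.toNat_of_nonneg (show (0:ℤ) ≤ ⌊1/x⌋ by omega)
    exact_mod_cast congrArg (fun z : ℤ => (z : ℝ)) this
  refine ⟨⟨⟨hG0, hG1⟩, hG_irr⟩, ?_, ?_⟩
  · rw [hd]
    unfold gaussMap
    rw [Int.fract]
    ring
  · unfold rcfDigit
    simp only [Nat.sub_self, Function.iterate_zero, id_eq]
    omega

lemma branch {t : ℝ} (ht : t ∈ X) {a : ℕ} (ha : 1 ≤ a) :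
    1/((a:ℝ) + t) ∈ X ∧ rcfDigit (1/((a:ℝ) + t)) 1 = a ∧ gaussMap (1/((a:ℝ) + t)) = t := by
  obtain ⟨⟨ht0, ht1⟩, hti⟩ := ht
  have ha1 : (1:ℝ) ≤ (a:ℝ) := by exact_mod_cast ha
  have hden : (1:ℝ) < (a:ℝ) + t := by linarith
  have hden0 : (0:ℝ) < (a:ℝ) + t := by linarith
  set x := 1/((a:ℝ) + t) with hxdef
  have hx0 : 0 < x := by positivity
  have hx1 : x < 1 := by
    rw [hxdef, div_lt_one hden0]; linarith
  have hsum_irr : Irrational ((a:ℝ) + t) := hti.natCast_add a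
  have hxirr : Irrational x := by
    rw [hxdef, one_div]; exact hsum_irr.inv
  have hinvx : 1/x = (a:ℝ) + t := by
    rw [hxdef, one_div_one_div]
  have hfl : ⌊1/x⌋ = (a:ℤ) := by
    rw [hinvx]
    rw [Int.floor_eq_iff]
    constructor
    · push_cast; linarith
    · push_cast; linarith
  refine ⟨⟨⟨hx0, hx1⟩, hxirr⟩, ?_, ?_⟩
  · unfold rcfDigit
    simp only [Nat.sub_self, Function.iterate_zero, id_eq]
    rw [hfl]; simp
  · unfold gaussMap
    rw [Int.fract, hfl, hinvx]
    push_cast; ring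

lemma rcfDigit_shift (x : ℝ) (m i : ℕ) (hi : 1 ≤ i) :
    rcfDigit x (i + m) = rcfDigit (gaussMap^[m] x) i := by
  unfold rcfDigit
  congr 2
  have : i + m - 1 = (i - 1) + m := by omega
  rw [this, Function.iterate_add_apply]

lemma iter_mem_X {x : ℝ} (hx : x ∈ X) (m : ℕ) : gaussMap^[m] x ∈ X := by
  induction m with
  | zero => simpa using hx
  | succ n ih =>
      rw [Function.iterate_succ_apply']
      exact (X_step ih).1

lemma rcfDigit_pos {x : ℝ} (hx : x ∈ X) {j : ℕ} (hj : 1 ≤ j) : 1 ≤ rcfDigit x j := by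
  have h : rcfDigit x (1 + (j-1)) = rcfDigit (gaussMap^[j-1] x) 1 :=
    rcfDigit_shift x (j-1) 1 le_rfl
  have hj' : 1 + (j - 1) = j := by omega
  rw [hj'] at h
  rw [h]
  exact (X_step (iter_mem_X hx (j-1))).2.2

lemma eq_branch {x : ℝ} (hx : x ∈ X) :
    x = 1/((rcfDigit x 1 : ℝ) + gaussMap x) := by
  obtain ⟨_, h2, _⟩ := X_step hx
  rw [h2, one_div_one_div]


/-! ### Cylinders -/

def cylSet (w : List ℕ) : Set ℝ :=
  {x | x ∈ X ∧ ∀ i < w.length, rcfDigit x (i+1) = w.getD i 0}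

lemma measurableSet_cylSet (w : List ℕ) : MeasurableSet (cylSet w) := by
  have : cylSet w = X ∩ ⋂ i ∈ Finset.range w.length,
      {x | rcfDigit x (i+1) = w.getD i 0} := by
    ext x
    simp only [cylSet, Set.mem_setOf_eq, Set.mem_inter_iff, Set.mem_iInter,
      Finset.mem_range, Finset.coe_range, Set.mem_Iio]
  rw [this]
  exact measurableSet_X.inter (MeasurableSet.biInter (Finset.range w.length).countable_toSet
    (fun i _ => (measurable_rcfDigit (i+1)) (measurableSet_singleton _)))

lemma cylSet_subset_X (w : List ℕ) : cylSet w ⊆ X := fun _ hx => hx.1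

lemma cylSet_cons {a : ℕ} {w : List ℕ} {x : ℝ} (hx : x ∈ X) :
    x ∈ cylSet (a :: w) ↔ rcfDigit x 1 = a ∧ gaussMap x ∈ cylSet w := by
  have hGx : gaussMap x ∈ X := (X_step hx).1
  have hshift : ∀ i : ℕ, rcfDigit x (i+1+1) = rcfDigit (gaussMap x) (i+1) := by
    intro i
    have := rcfDigit_shift x 1 (i+1) (by omega)
    simpa using this
  constructor
  · rintro ⟨-, h⟩
    refine ⟨by simpa using h 0 (by simp), hGx, fun i hi => ?_⟩
    rw [← hshift i]
    have := h (i+1) (by simpa using Nat.succ_lt_succ hi)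
    simpa using this
  · rintro ⟨h1, -, h2⟩
    refine ⟨hx, fun i hi => ?_⟩
    cases i with
    | zero => simpa using h1
    | succ j =>
        rw [hshift j]
        have := h2 j (by simpa using Nat.lt_of_succ_lt_succ hi)
        simpa using this

lemma cylSet_nil : cylSet [] = X := by
  ext x; simp [cylSet]

/-! ### Möbius coefficients -/

def mcoef : List ℕ → ℤ × ℤ × ℤ × ℤ
  | [] => (0, 1, 1, 0)
  | a :: w => ((mcoef w).2.2.1, (mcoef w).2.2.2,
      a * (mcoef w).2.2.1 + (mcoef w).1, a * (mcoef w).2.2.2 + (mcoef w).2.1)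

def mP (w : List ℕ) : ℤ := (mcoef w).1
def mP' (w : List ℕ) : ℤ := (mcoef w).2.1
def mQ (w : List ℕ) : ℤ := (mcoef w).2.2.1
def mQ' (w : List ℕ) : ℤ := (mcoef w).2.2.2

@[simp] lemma mP_nil : mP [] = 0 := rfl
@[simp] lemma mP'_nil : mP' [] = 1 := rfl
@[simp] lemma mQ_nil : mQ [] = 1 := rfl
@[simp] lemma mQ'_nil : mQ' [] = 0 := rfl
@[simp] lemma mP_cons (a : ℕ) (w : List ℕ) : mP (a :: w) = mQ w := rfl
@[simp] lemma mP'_cons (a : ℕ) (w : List ℕ) : mP' (a :: w) = mQ' w := rfl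
@[simp] lemma mQ_cons (a : ℕ) (w : List ℕ) : mQ (a :: w) = a * mQ w + mP w := rfl
@[simp] lemma mQ'_cons (a : ℕ) (w : List ℕ) : mQ' (a :: w) = a * mQ' w + mP' w := rfl

lemma mcoef_weak (w : List ℕ) (hw : ∀ a ∈ w, 1 ≤ a) :
    0 ≤ mP w ∧ 0 ≤ mP' w ∧ 1 ≤ mQ w ∧ 0 ≤ mQ' w := by
  induction w with
  | nil => simp
  | cons a w ih =>
      have ha : 1 ≤ a := hw a (by simp)
      obtain ⟨h1, h2, h3, h4⟩ := ih (fun b hb => hw b (by simp [hb]))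
      refine ⟨by simp; omega, by simp; omega, ?_, ?_⟩
      · simp only [mQ_cons]
        have : (1:ℤ) ≤ (a:ℤ) := by exact_mod_cast ha
        nlinarith
      · simp only [mQ'_cons]
        have : (0:ℤ) ≤ (a:ℤ) := by positivity
        nlinarith

lemma mcoef_det (w : List ℕ) :
    mP w * mQ' w - mP' w * mQ w = 1 ∨ mP w * mQ' w - mP' w * mQ w = -1 := by
  induction w with
  | nil => simp
  | cons a w ih =>
      simp only [mP_cons, mP'_cons, mQ_cons, mQ'_cons]
      rcases ih with h | h
      · right; nlinarith
      · left; nlinarith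

lemma mcoef_strong (w : List ℕ) (hw : ∀ a ∈ w, 1 ≤ a) (hne : w ≠ []) :
    mQ' w ≤ mQ w ∧ mP' w ≤ mP w := by
  induction w with
  | nil => exact absurd rfl hne
  | cons a w ih =>
      have ha : (1:ℤ) ≤ (a:ℤ) := by exact_mod_cast hw a (by simp)
      obtain ⟨h1, h2, h3, h4⟩ := mcoef_weak w (fun b hb => hw b (by simp [hb]))
      cases w with
      | nil => simp; omega
      | cons b w' =>
          obtain ⟨hq, hp⟩ := ih (fun c hc => hw c (by simp at hc ⊢; tauto)) (by simp)
          constructor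
          · rw [mQ_cons, mQ'_cons]
            nlinarith
          · simpa using hq


/-! ### The inverse branch maps -/

noncomputable def psiM (w : List ℕ) (t : ℝ) : ℝ :=
  ((mP w : ℝ) + (mP' w : ℝ) * t) / ((mQ w : ℝ) + (mQ' w : ℝ) * t)

noncomputable def psiR : List ℕ → ℝ → ℝ
  | [], t => t
  | a :: w, t => 1 / ((a : ℝ) + psiR w t)

lemma denom_pos (w : List ℕ) (hw : ∀ a ∈ w, 1 ≤ a) {t : ℝ} (ht0 : 0 ≤ t) :
    0 < (mQ w : ℝ) + (mQ' w : ℝ) * t := by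
  obtain ⟨-, -, h3, h4⟩ := mcoef_weak w hw
  have h3' : (1:ℝ) ≤ (mQ w : ℝ) := by exact_mod_cast h3
  have h4' : (0:ℝ) ≤ (mQ' w : ℝ) := by exact_mod_cast h4
  nlinarith

lemma psiR_eq_psiM (w : List ℕ) (hw : ∀ a ∈ w, 1 ≤ a) {t : ℝ}
    (ht : t ∈ Set.Icc (0:ℝ) 1) :
    0 ≤ psiR w t ∧ psiR w t = psiM w t := by
  induction w with
  | nil =>
      simp [psiR, psiM, ht.1]
  | cons a w ih =>
      have hw' : ∀ b ∈ w, 1 ≤ b := fun b hb => hw b (by simp [hb])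
      have ha : (1:ℝ) ≤ (a:ℝ) := by exact_mod_cast hw a (by simp)
      obtain ⟨hu0, hueq⟩ := ih hw'
      have hD1 : 0 < (mQ w : ℝ) + (mQ' w : ℝ) * t := denom_pos w hw' ht.1
      have hD2 : 0 < (mQ (a::w) : ℝ) + (mQ' (a::w) : ℝ) * t :=
        denom_pos (a::w) hw ht.1
      have hx0 : 0 ≤ psiR (a :: w) t := by
        show 0 ≤ 1 / ((a : ℝ) + psiR w t)
        positivity
      refine ⟨hx0, ?_⟩
      show 1 / ((a : ℝ) + psiR w t) = psiM (a::w) t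
      rw [hueq]
      have hkey : (a:ℝ) + psiM w t
          = ((mQ (a::w) : ℝ) + (mQ' (a::w) : ℝ) * t) / ((mQ w : ℝ) + (mQ' w : ℝ) * t) := by
        unfold psiM
        rw [mQ_cons, mQ'_cons]
        push_cast
        rw [eq_div_iff hD1.ne', add_mul, div_mul_cancel₀ _ hD1.ne']
        ring
      rw [hkey, one_div_div]
      unfold psiM
      rw [mP_cons, mP'_cons]

lemma psiR_mem (w : List ℕ) (hw : ∀ a ∈ w, 1 ≤ a) {t : ℝ} (ht : t ∈ X) :
    psiR w t ∈ cylSet w ∧ gaussMap^[w.length] (psiR w t) = t := by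
  induction w with
  | nil => simpa [psiR, cylSet_nil] using ht
  | cons a w ih =>
      have hw' : ∀ b ∈ w, 1 ≤ b := fun b hb => hw b (by simp [hb])
      have ha : 1 ≤ a := hw a (by simp)
      obtain ⟨hu_cyl, hu_it⟩ := ih hw'
      have hu_X : psiR w t ∈ X := cylSet_subset_X w hu_cyl
      obtain ⟨hx_X, hx_d, hx_G⟩ := branch hu_X ha
      have hxdef : psiR (a :: w) t = 1/((a:ℝ) + psiR w t) := rfl
      rw [hxdef]
      constructor
      · rw [cylSet_cons hx_X]
        exact ⟨hx_d, by rw [hx_G]; exact hu_cyl⟩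
      · rw [List.length_cons, Function.iterate_succ_apply, hx_G, hu_it]

lemma cyl_eq_psiR {w : List ℕ} {x : ℝ} (hx : x ∈ cylSet w) :
    psiR w (gaussMap^[w.length] x) = x := by
  induction w generalizing x with
  | nil => rfl
  | cons a w ih =>
      have hxX : x ∈ X := hx.1
      rw [cylSet_cons hxX] at hx
      obtain ⟨hd, hG⟩ := hx
      have : psiR (a :: w) (gaussMap^[(a::w).length] x)
          = 1/((a:ℝ) + psiR w (gaussMap^[w.length] (gaussMap x))) := by
        rw [List.length_cons, Function.iterate_succ_apply]
        rfl
      rw [this, ih hG, ← hd]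
      exact (eq_branch hxX).symm

lemma cyl_inter_preimage (w : List ℕ) (hw : ∀ a ∈ w, 1 ≤ a) (A : Set ℝ) (hA : A ⊆ X) :
    cylSet w ∩ (gaussMap^[w.length]) ⁻¹' A = psiR w '' A := by
  ext x
  constructor
  · rintro ⟨hxc, hxA⟩
    exact ⟨gaussMap^[w.length] x, hxA, cyl_eq_psiR hxc⟩
  · rintro ⟨t, htA, rfl⟩
    obtain ⟨h1, h2⟩ := psiR_mem w hw (hA htA)
    exact ⟨h1, by rw [Set.mem_preimage, h2]; exact htA⟩


/-! ### Distortion estimates -/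

noncomputable def phiM (w : List ℕ) (u : ℝ) : ℝ :=
  ((mP w : ℝ) - (mQ w : ℝ) * u) / ((mQ' w : ℝ) * u - (mP' w : ℝ))

lemma det_abs (w : List ℕ) : |(mP w : ℝ) * (mQ' w : ℝ) - (mP' w : ℝ) * (mQ w : ℝ)| = 1 := by
  rcases mcoef_det w with h | h
  · have : (mP w : ℝ) * (mQ' w : ℝ) - (mP' w : ℝ) * (mQ w : ℝ) = 1 := by exact_mod_cast h
    rw [this]; simp
  · have : (mP w : ℝ) * (mQ' w : ℝ) - (mP' w : ℝ) * (mQ w : ℝ) = -1 := by exact_mod_cast h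
    rw [this]; simp

lemma psiM_dist (w : List ℕ) (hw : ∀ a ∈ w, 1 ≤ a) {s t : ℝ}
    (hs : s ∈ Set.Icc (0:ℝ) 1) (ht : t ∈ Set.Icc (0:ℝ) 1) :
    |psiM w s - psiM w t| * (((mQ w : ℝ) + (mQ' w : ℝ) * s) * ((mQ w : ℝ) + (mQ' w : ℝ) * t))
      = |s - t| := by
  have hDs : 0 < (mQ w : ℝ) + (mQ' w : ℝ) * s := denom_pos w hw hs.1
  have hDt : 0 < (mQ w : ℝ) + (mQ' w : ℝ) * t := denom_pos w hw ht.1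
  have key : (psiM w s - psiM w t) * (((mQ w : ℝ) + (mQ' w : ℝ) * s) * ((mQ w : ℝ) + (mQ' w : ℝ) * t))
      = ((mP' w : ℝ) * (mQ w : ℝ) - (mP w : ℝ) * (mQ' w : ℝ)) * (s - t) := by
    unfold psiM
    rw [div_sub_div _ _ hDs.ne' hDt.ne', div_mul_cancel₀ _ (mul_pos hDs hDt).ne']
    ring
  have hdet1 : |(mP' w : ℝ) * (mQ w : ℝ) - (mP w : ℝ) * (mQ' w : ℝ)| = 1 := by
    rw [← det_abs w, ← abs_neg]
    congr 1
    ring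
  have habs := congrArg abs key
  rw [abs_mul, abs_mul, abs_of_pos hDs, abs_of_pos hDt, abs_mul, hdet1, one_mul] at habs
  exact habs

lemma quad_bounds (w : List ℕ) (hw : ∀ a ∈ w, 1 ≤ a) {s : ℝ} (hs : s ∈ Set.Icc (0:ℝ) 1) :
    (mQ w : ℝ) ≤ (mQ w : ℝ) + (mQ' w : ℝ) * s ∧
    (mQ w : ℝ) + (mQ' w : ℝ) * s ≤ (mQ w : ℝ) + (mQ' w : ℝ) := by
  obtain ⟨-, -, h3, h4⟩ := mcoef_weak w hw
  have h4' : (0:ℝ) ≤ (mQ' w : ℝ) := by exact_mod_cast h4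
  constructor
  · nlinarith [hs.1]
  · nlinarith [hs.2]

lemma psiM_dist_le (w : List ℕ) (hw : ∀ a ∈ w, 1 ≤ a) {s t : ℝ}
    (hs : s ∈ Set.Icc (0:ℝ) 1) (ht : t ∈ Set.Icc (0:ℝ) 1) :
    |psiM w s - psiM w t| ≤ (((mQ w : ℝ))^2)⁻¹ * |s - t| := by
  have hQ : (1:ℝ) ≤ (mQ w : ℝ) := by exact_mod_cast (mcoef_weak w hw).2.2.1
  have h1 := (quad_bounds w hw hs).1
  have h2 := (quad_bounds w hw ht).1
  have hd := psiM_dist w hw hs ht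
  have hDs : 0 < (mQ w : ℝ) + (mQ' w : ℝ) * s := denom_pos w hw hs.1
  have hDt : 0 < (mQ w : ℝ) + (mQ' w : ℝ) * t := denom_pos w hw ht.1
  have habs : 0 ≤ |psiM w s - psiM w t| := abs_nonneg _
  have hprod : ((mQ w : ℝ))^2 ≤ ((mQ w : ℝ) + (mQ' w : ℝ) * s) * ((mQ w : ℝ) + (mQ' w : ℝ) * t) := by
    nlinarith
  rw [← hd, inv_mul_eq_div, le_div_iff₀ (by positivity : (0:ℝ) < ((mQ w : ℝ))^2)]
  exact mul_le_mul_of_nonneg_left hprod habs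

lemma psiM_dist_ge (w : List ℕ) (hw : ∀ a ∈ w, 1 ≤ a) {s t : ℝ}
    (hs : s ∈ Set.Icc (0:ℝ) 1) (ht : t ∈ Set.Icc (0:ℝ) 1) :
    |s - t| ≤ ((mQ w : ℝ) + (mQ' w : ℝ))^2 * |psiM w s - psiM w t| := by
  have hQ : (1:ℝ) ≤ (mQ w : ℝ) := by exact_mod_cast (mcoef_weak w hw).2.2.1
  have h1 := (quad_bounds w hw hs).2
  have h2 := (quad_bounds w hw ht).2
  have hd := psiM_dist w hw hs ht
  have hDs : 0 < (mQ w : ℝ) + (mQ' w : ℝ) * s := denom_pos w hw hs.1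
  have hDt : 0 < (mQ w : ℝ) + (mQ' w : ℝ) * t := denom_pos w hw ht.1
  have habs : 0 ≤ |psiM w s - psiM w t| := abs_nonneg _
  have hprod : ((mQ w : ℝ) + (mQ' w : ℝ) * s) * ((mQ w : ℝ) + (mQ' w : ℝ) * t)
      ≤ ((mQ w : ℝ) + (mQ' w : ℝ))^2 := by
    nlinarith
  rw [← hd]
  calc |psiM w s - psiM w t| * (((mQ w : ℝ) + (mQ' w : ℝ) * s) * ((mQ w : ℝ) + (mQ' w : ℝ) * t))
      ≤ |psiM w s - psiM w t| * ((mQ w : ℝ) + (mQ' w : ℝ))^2 :=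
        mul_le_mul_of_nonneg_left hprod habs
    _ = ((mQ w : ℝ) + (mQ' w : ℝ))^2 * |psiM w s - psiM w t| := by ring

lemma phiM_psiM (w : List ℕ) (hw : ∀ a ∈ w, 1 ≤ a) {t : ℝ}
    (ht : t ∈ Set.Icc (0:ℝ) 1) : phiM w (psiM w t) = t := by
  have hDt : 0 < (mQ w : ℝ) + (mQ' w : ℝ) * t := denom_pos w hw ht.1
  have hdet : (mP w : ℝ) * (mQ' w : ℝ) - (mP' w : ℝ) * (mQ w : ℝ) ≠ 0 := by
    intro h
    have := det_abs w
    rw [h] at this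
    simp at this
  have hpsi : psiM w t
      = ((mP w : ℝ) + (mP' w : ℝ) * t) / ((mQ w : ℝ) + (mQ' w : ℝ) * t) := rfl
  have h1 : (mQ' w : ℝ) * psiM w t - (mP' w : ℝ)
      = ((mP w : ℝ) * (mQ' w : ℝ) - (mP' w : ℝ) * (mQ w : ℝ)) / ((mQ w : ℝ) + (mQ' w : ℝ) * t) := by
    rw [hpsi]
    field_simp
    ring
  have h2 : (mP w : ℝ) - (mQ w : ℝ) * psiM w t
      = (((mP w : ℝ) * (mQ' w : ℝ) - (mP' w : ℝ) * (mQ w : ℝ)) * t) / ((mQ w : ℝ) + (mQ' w : ℝ) * t) := by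
    rw [hpsi]
    rw [eq_div_iff hDt.ne', sub_mul, mul_assoc, div_mul_cancel₀ _ hDt.ne']
    ring
  show ((mP w : ℝ) - (mQ w : ℝ) * psiM w t) / ((mQ' w : ℝ) * psiM w t - (mP' w : ℝ)) = t
  rw [h1, h2]
  rw [div_div_div_cancel_right₀]
  · exact mul_div_cancel_left₀ t hdet
  · exact ne_of_gt hDt


/-! ### Measure estimates -/

lemma X_subset_Icc : X ⊆ Set.Icc (0:ℝ) 1 := fun x hx => ⟨hx.1.1.le, hx.1.2.le⟩

lemma psiR_image_eq (w : List ℕ) (hw : ∀ a ∈ w, 1 ≤ a) {A : Set ℝ} (hA : A ⊆ X) :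
    psiR w '' A = psiM w '' A :=
  Set.image_congr fun t ht => (psiR_eq_psiM w hw (X_subset_Icc (hA ht))).2

lemma volume_image_le (w : List ℕ) (hw : ∀ a ∈ w, 1 ≤ a) {A : Set ℝ} (hA : A ⊆ X) :
    volume (psiM w '' A) ≤ ENNReal.ofReal (((mQ w : ℝ))^2)⁻¹ * volume A := by
  have hQ : (1:ℝ) ≤ (mQ w : ℝ) := by exact_mod_cast (mcoef_weak w hw).2.2.1
  have hlip : LipschitzOnWith ((((mQ w : ℝ))^2)⁻¹).toNNReal (psiM w) A := by
    apply LipschitzOnWith.of_dist_le_mul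
    intro x hx y hy
    rw [Real.dist_eq, Real.dist_eq, Real.coe_toNNReal _ (by positivity)]
    exact psiM_dist_le w hw (X_subset_Icc (hA hx)) (X_subset_Icc (hA hy))
  have h := hlip.hausdorffMeasure_image_le (zero_le_one)
  rw [MeasureTheory.hausdorffMeasure_real, ENNReal.rpow_one] at h
  exact h

lemma volume_le_image (w : List ℕ) (hw : ∀ a ∈ w, 1 ≤ a) {A : Set ℝ} (hA : A ⊆ X) :
    volume A ≤ ENNReal.ofReal (((mQ w : ℝ) + (mQ' w : ℝ))^2) * volume (psiM w '' A) := by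
  have hQ : (1:ℝ) ≤ (mQ w : ℝ) := by exact_mod_cast (mcoef_weak w hw).2.2.1
  have hQ' : (0:ℝ) ≤ (mQ' w : ℝ) := by exact_mod_cast (mcoef_weak w hw).2.2.2
  have himg : phiM w '' (psiM w '' A) = A := by
    rw [Set.image_image]
    have : ∀ t ∈ A, phiM w (psiM w t) = t := fun t ht => phiM_psiM w hw (X_subset_Icc (hA ht))
    rw [Set.image_congr this]
    exact Set.image_id A
  have hlip : LipschitzOnWith ((((mQ w : ℝ) + (mQ' w : ℝ))^2)).toNNReal (phiM w) (psiM w '' A) := by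
    apply LipschitzOnWith.of_dist_le_mul
    rintro x ⟨sx, hsx, rfl⟩ y ⟨sy, hsy, rfl⟩
    rw [Real.dist_eq, Real.dist_eq, Real.coe_toNNReal _ (by positivity),
      phiM_psiM w hw (X_subset_Icc (hA hsx)), phiM_psiM w hw (X_subset_Icc (hA hsy))]
    exact psiM_dist_ge w hw (X_subset_Icc (hA hsx)) (X_subset_Icc (hA hsy))
  have h := hlip.hausdorffMeasure_image_le (zero_le_one)
  rw [MeasureTheory.hausdorffMeasure_real, ENNReal.rpow_one, himg] at h
  exact h

lemma cyl_eq_image (w : List ℕ) (hw : ∀ a ∈ w, 1 ≤ a) :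
    cylSet w = psiR w '' X := by
  rw [← cyl_inter_preimage w hw X (subset_refl _)]
  symm
  apply Set.inter_eq_self_of_subset_left
  intro x hx
  exact iter_mem_X (cylSet_subset_X w hx) w.length

lemma c_one_le (w : List ℕ) (hw : ∀ a ∈ w, 1 ≤ a) (hne : w ≠ []) :
    ENNReal.ofReal (((mQ w : ℝ))^2)⁻¹
      ≤ 4 * ENNReal.ofReal (((mQ w : ℝ) + (mQ' w : ℝ))^2)⁻¹ := by
  have hQ : (1:ℝ) ≤ (mQ w : ℝ) := by exact_mod_cast (mcoef_weak w hw).2.2.1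
  have hQ' : (0:ℝ) ≤ (mQ' w : ℝ) := by exact_mod_cast (mcoef_weak w hw).2.2.2
  have hQQ : (mQ' w : ℝ) ≤ (mQ w : ℝ) := by exact_mod_cast (mcoef_strong w hw hne).1
  have hreal : (((mQ w : ℝ))^2)⁻¹ ≤ 4 * (((mQ w : ℝ) + (mQ' w : ℝ))^2)⁻¹ := by
    have h4 : ((mQ w : ℝ) + (mQ' w : ℝ))^2 / 4 ≤ ((mQ w : ℝ))^2 := by nlinarith
    calc (((mQ w : ℝ))^2)⁻¹ ≤ (((mQ w : ℝ) + (mQ' w : ℝ))^2 / 4)⁻¹ := by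
          apply inv_anti₀ (by positivity) h4
      _ = 4 * (((mQ w : ℝ) + (mQ' w : ℝ))^2)⁻¹ := by
          rw [div_eq_mul_inv, mul_inv, mul_comm]
          norm_num
  calc ENNReal.ofReal (((mQ w : ℝ))^2)⁻¹ ≤ ENNReal.ofReal (4 * (((mQ w : ℝ) + (mQ' w : ℝ))^2)⁻¹) :=
        ENNReal.ofReal_le_ofReal hreal
    _ = 4 * ENNReal.ofReal (((mQ w : ℝ) + (mQ' w : ℝ))^2)⁻¹ := by
        rw [ENNReal.ofReal_mul (by norm_num)]
        norm_num


lemma ennreal_inv_helper {c : ℝ} (hc : 0 < c) {a b : ℝ≥0∞}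
    (h : a ≤ ENNReal.ofReal c * b) : ENNReal.ofReal c⁻¹ * a ≤ b := by
  calc ENNReal.ofReal c⁻¹ * a ≤ ENNReal.ofReal c⁻¹ * (ENNReal.ofReal c * b) :=
        mul_le_mul_right h _
    _ = (ENNReal.ofReal c⁻¹ * ENNReal.ofReal c) * b := (mul_assoc _ _ _).symm
    _ = b := by
        rw [← ENNReal.ofReal_mul (by positivity), inv_mul_cancel₀ (ne_of_gt hc),
          ENNReal.ofReal_one, one_mul]

lemma im_lb (w : List ℕ) (hw : ∀ a ∈ w, 1 ≤ a) {A : Set ℝ} (hA : A ⊆ X) :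
    ENNReal.ofReal (((mQ w : ℝ) + (mQ' w : ℝ))^2)⁻¹ * volume A ≤ volume (psiM w '' A) := by
  have hQ : (1:ℝ) ≤ (mQ w : ℝ) := by exact_mod_cast (mcoef_weak w hw).2.2.1
  have hQ' : (0:ℝ) ≤ (mQ' w : ℝ) := by exact_mod_cast (mcoef_weak w hw).2.2.2
  exact ennreal_inv_helper (by positivity) (volume_le_image w hw hA)

lemma vol_cyl_le (w : List ℕ) (hw : ∀ a ∈ w, 1 ≤ a) :
    volume (cylSet w) ≤ ENNReal.ofReal (((mQ w : ℝ))^2)⁻¹ := by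
  rw [cyl_eq_image w hw, psiR_image_eq w hw (subset_refl X)]
  calc volume (psiM w '' X) ≤ ENNReal.ofReal (((mQ w : ℝ))^2)⁻¹ * volume X :=
        volume_image_le w hw (subset_refl X)
    _ = ENNReal.ofReal (((mQ w : ℝ))^2)⁻¹ := by rw [volume_X, mul_one]

lemma vol_cyl_ge (w : List ℕ) (hw : ∀ a ∈ w, 1 ≤ a) :
    ENNReal.ofReal (((mQ w : ℝ) + (mQ' w : ℝ))^2)⁻¹ ≤ volume (cylSet w) := by
  rw [cyl_eq_image w hw, psiR_image_eq w hw (subset_refl X)]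
  calc ENNReal.ofReal (((mQ w : ℝ) + (mQ' w : ℝ))^2)⁻¹
      = ENNReal.ofReal (((mQ w : ℝ) + (mQ' w : ℝ))^2)⁻¹ * volume X := by rw [volume_X, mul_one]
    _ ≤ volume (psiM w '' X) := im_lb w hw (subset_refl X)

lemma dist_upper (w : List ℕ) (hw : ∀ a ∈ w, 1 ≤ a) (hne : w ≠ []) {A : Set ℝ} (hA : A ⊆ X) :
    volume (cylSet w ∩ (gaussMap^[w.length]) ⁻¹' A) ≤ 4 * (volume (cylSet w) * volume A) := by
  rw [cyl_inter_preimage w hw A hA, psiR_image_eq w hw hA]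
  calc volume (psiM w '' A) ≤ ENNReal.ofReal (((mQ w : ℝ))^2)⁻¹ * volume A :=
        volume_image_le w hw hA
    _ ≤ (4 * ENNReal.ofReal (((mQ w : ℝ) + (mQ' w : ℝ))^2)⁻¹) * volume A :=
        mul_le_mul_left (c_one_le w hw hne) _
    _ = 4 * (ENNReal.ofReal (((mQ w : ℝ) + (mQ' w : ℝ))^2)⁻¹ * volume A) := by ring
    _ ≤ 4 * (volume (cylSet w) * volume A) := by
        apply mul_le_mul_right
        exact mul_le_mul_left (vol_cyl_ge w hw) _

lemma dist_lower (w : List ℕ) (hw : ∀ a ∈ w, 1 ≤ a) (hne : w ≠ []) {A : Set ℝ} (hA : A ⊆ X) :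
    volume (cylSet w) * volume A ≤ 4 * volume (cylSet w ∩ (gaussMap^[w.length]) ⁻¹' A) := by
  rw [cyl_inter_preimage w hw A hA, psiR_image_eq w hw hA]
  calc volume (cylSet w) * volume A ≤ ENNReal.ofReal (((mQ w : ℝ))^2)⁻¹ * volume A :=
        mul_le_mul_left (vol_cyl_le w hw) _
    _ ≤ (4 * ENNReal.ofReal (((mQ w : ℝ) + (mQ' w : ℝ))^2)⁻¹) * volume A :=
        mul_le_mul_left (c_one_le w hw hne) _
    _ = 4 * (ENNReal.ofReal (((mQ w : ℝ) + (mQ' w : ℝ))^2)⁻¹ * volume A) := by ring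
    _ ≤ 4 * volume (psiM w '' A) := mul_le_mul_right (im_lb w hw hA) _


/-! ### Constrained digit sets -/

def ESet (T : Set ℕ) (v : ℕ → ℕ) : Set ℝ := {x | x ∈ X ∧ ∀ j ∈ T, rcfDigit x j = v j}

lemma ESet_subset_X (T : Set ℕ) (v : ℕ → ℕ) : ESet T v ⊆ X := fun _ hx => hx.1

lemma measurableSet_ESet (T : Set ℕ) (v : ℕ → ℕ) : MeasurableSet (ESet T v) := by
  have : ESet T v = X ∩ ⋂ j ∈ T, {x | rcfDigit x j = v j} := by
    ext x
    simp only [ESet, Set.mem_setOf_eq, Set.mem_inter_iff, Set.mem_iInter]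
  rw [this]
  exact measurableSet_X.inter (MeasurableSet.biInter (Set.to_countable T)
    (fun j _ => (measurable_rcfDigit j) (measurableSet_singleton _)))

lemma ennreal_inv_helper2 {c : ℝ} (hc : 0 < c) {a b : ℝ≥0∞}
    (h : ENNReal.ofReal c * a ≤ b) : a ≤ ENNReal.ofReal c⁻¹ * b := by
  calc a = (ENNReal.ofReal c⁻¹ * ENNReal.ofReal c) * a := by
        rw [← ENNReal.ofReal_mul (by positivity), inv_mul_cancel₀ (ne_of_gt hc),
          ENNReal.ofReal_one, one_mul]
    _ = ENNReal.ofReal c⁻¹ * (ENNReal.ofReal c * a) := mul_assoc _ _ _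
    _ ≤ ENNReal.ofReal c⁻¹ * b := mul_le_mul_right h _

lemma mem_cylSet_singleton {a : ℕ} {x : ℝ} :
    x ∈ cylSet [a] ↔ x ∈ X ∧ rcfDigit x 1 = a := by
  constructor
  · rintro ⟨hx, h⟩
    exact ⟨hx, by simpa using h 0 (by norm_num)⟩
  · rintro ⟨hx, h⟩
    refine ⟨hx, fun i hi => ?_⟩
    have : i = 0 := by simpa using hi
    subst this
    simpa using h

lemma main_one (R : ℕ) (hR : 1 ≤ R) (T : Set ℕ) (v : ℕ → ℕ) (hT : ∀ j ∈ T, 2 ≤ j) :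
    volume {x | x ∈ ESet T v ∧ rcfDigit x 1 = R}
      ≤ ENNReal.ofReal (64 / (R:ℝ)^2) * volume (ESet T v) := by
  set C : Set ℝ := ESet {i | i + 1 ∈ T} (fun i => v (i+1)) with hC
  have hCX : C ⊆ X := ESet_subset_X _ _
  have hshift_iff : ∀ x ∈ X, ((∀ j ∈ T, rcfDigit x j = v j) ↔ gaussMap^[1] x ∈ C) := by
    intro x hx
    constructor
    · intro h
      refine ⟨iter_mem_X hx 1, fun i hi => ?_⟩
      have hi2 : 2 ≤ i + 1 := hT _ hi
      rw [← rcfDigit_shift x 1 i (by omega)]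
      exact h (i+1) hi
    · rintro ⟨-, h⟩ j hj
      have hj2 : 2 ≤ j := hT j hj
      have hjeq : (j - 1) + 1 = j := by omega
      have hmem : (j-1) ∈ {i | i + 1 ∈ T} := by
        simp only [Set.mem_setOf_eq, hjeq]
        exact hj
      have := h (j-1) hmem
      rw [← rcfDigit_shift x 1 (j-1) (by omega), hjeq] at this
      simpa [hjeq] using this
  have hset1 : {x | x ∈ ESet T v ∧ rcfDigit x 1 = R}
      = cylSet [R] ∩ (gaussMap^[([R] : List ℕ).length]) ⁻¹' C := by
    ext x
    simp only [Set.mem_setOf_eq, Set.mem_inter_iff, Set.mem_preimage, List.length_cons,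
      List.length_nil, zero_add]
    constructor
    · rintro ⟨⟨hxX, hj⟩, h1⟩
      exact ⟨mem_cylSet_singleton.2 ⟨hxX, h1⟩, (hshift_iff x hxX).1 hj⟩
    · rintro ⟨hcyl, hpre⟩
      obtain ⟨hxX, h1⟩ := mem_cylSet_singleton.1 hcyl
      exact ⟨⟨hxX, (hshift_iff x hxX).2 hpre⟩, h1⟩
  have hset2 : cylSet [1] ∩ (gaussMap^[([1] : List ℕ).length]) ⁻¹' C ⊆ ESet T v := by
    rintro x ⟨hcyl, hpre⟩
    obtain ⟨hxX, -⟩ := mem_cylSet_singleton.1 hcyl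
    refine ⟨hxX, (hshift_iff x hxX).2 ?_⟩
    simpa using hpre
  have hQR : (mQ [R] : ℝ) = (R : ℝ) := by simp
  have hQR' : (mQ' [R] : ℝ) = 1 := by simp
  have hQ1 : (mQ [1] : ℝ) = 1 := by simp
  have hQ1' : (mQ' [1] : ℝ) = 1 := by simp
  -- upper bound for the constrained set
  have hup : volume {x | x ∈ ESet T v ∧ rcfDigit x 1 = R}
      ≤ 4 * (ENNReal.ofReal ((R:ℝ)^2)⁻¹ * volume C) := by
    rw [hset1]
    calc volume (cylSet [R] ∩ (gaussMap^[([R] : List ℕ).length]) ⁻¹' C)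
        ≤ 4 * (volume (cylSet [R]) * volume C) :=
          dist_upper [R] (by simpa using hR) (by simp) hCX
      _ ≤ 4 * (ENNReal.ofReal ((R:ℝ)^2)⁻¹ * volume C) := by
          apply mul_le_mul_right
          apply mul_le_mul_left
          have := vol_cyl_le [R] (by simpa using hR)
          rwa [hQR] at this
  -- lower bound for the unconstrained set
  have hlowC : volume C ≤ ENNReal.ofReal ((4:ℝ)⁻¹)⁻¹ * (4 * volume (ESet T v)) := by
    apply ennreal_inv_helper2 (by norm_num)
    calc ENNReal.ofReal (4:ℝ)⁻¹ * volume C ≤ volume (cylSet [1]) * volume C := by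
          apply mul_le_mul_left
          have := vol_cyl_ge [1] (by simp)
          rw [hQ1, hQ1'] at this
          calc ENNReal.ofReal (4:ℝ)⁻¹ = ENNReal.ofReal (((1:ℝ)+1)^2)⁻¹ := by norm_num
            _ ≤ volume (cylSet [1]) := this
      _ ≤ 4 * volume (cylSet [1] ∩ (gaussMap^[([1] : List ℕ).length]) ⁻¹' C) :=
          dist_lower [1] (by simp) (by simp) hCX
      _ ≤ 4 * volume (ESet T v) := mul_le_mul_right (measure_mono hset2) _
  have hfinal : volume {x | x ∈ ESet T v ∧ rcfDigit x 1 = R}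
      ≤ 4 * (ENNReal.ofReal ((R:ℝ)^2)⁻¹ * (ENNReal.ofReal ((4:ℝ)⁻¹)⁻¹ * (4 * volume (ESet T v)))) :=
    le_trans hup (mul_le_mul_right (mul_le_mul_right hlowC _) _)
  refine le_trans hfinal (le_of_eq ?_)
  have h4 : (4 : ℝ≥0∞) = ENNReal.ofReal (4:ℝ) := by norm_num
  rw [inv_inv, h4]
  have e1 : ENNReal.ofReal (4:ℝ) * (ENNReal.ofReal ((R:ℝ)^2)⁻¹ * (ENNReal.ofReal (4:ℝ) * (ENNReal.ofReal (4:ℝ) * volume (ESet T v))))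
      = (ENNReal.ofReal (4:ℝ) * (ENNReal.ofReal ((R:ℝ)^2)⁻¹ * (ENNReal.ofReal (4:ℝ) * ENNReal.ofReal (4:ℝ)))) * volume (ESet T v) := by
    ring
  rw [e1]
  congr 1
  rw [← ENNReal.ofReal_mul (by norm_num), ← ENNReal.ofReal_mul (by positivity),
    ← ENNReal.ofReal_mul (by norm_num)]
  congr 1
  have hRpos : (0:ℝ) < (R:ℝ)^2 := by
    have : (1:ℝ) ≤ (R:ℝ) := by exact_mod_cast hR
    positivity
  field_simp
  ring


lemma getD_ofFn {m : ℕ} (f : Fin m → ℕ) {i : ℕ} (hi : i < m) :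
    (List.ofFn f).getD i 0 = f ⟨i, hi⟩ := by
  rw [List.getD_eq_getElem _ _ (by simpa using hi)]
  simp

lemma cyl_entries_pos {w : List ℕ} {x : ℝ} (hx : x ∈ cylSet w) : ∀ a ∈ w, 1 ≤ a := by
  intro a ha
  obtain ⟨i, hi, rfl⟩ := List.mem_iff_getElem.1 ha
  have h := hx.2 i hi
  rw [List.getD_eq_getElem _ _ hi] at h
  rw [← h]
  exact rcfDigit_pos hx.1 (by omega)

lemma mem_cyl_self {x : ℝ} (hx : x ∈ X) (m : ℕ) :
    x ∈ cylSet (List.ofFn (fun i : Fin m => rcfDigit x (i+1))) := by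
  refine ⟨hx, fun i hi => ?_⟩
  have hi' : i < m := by simpa using hi
  rw [getD_ofFn _ hi']

lemma cyl_disjoint {m : ℕ} {w w' : Fin m → ℕ} (h : w ≠ w') :
    Disjoint (cylSet (List.ofFn w)) (cylSet (List.ofFn w')) := by
  rw [Set.disjoint_left]
  rintro x hx hx'
  apply h
  funext i
  have h1 := hx.2 i.val (by simpa using i.isLt)
  have h2 := hx'.2 i.val (by simpa using i.isLt)
  rw [getD_ofFn _ i.isLt] at h1 h2
  simp only [Fin.eta] at h1 h2
  rw [← h1, ← h2]

lemma main_gen (K R : ℕ) (hK : 1 ≤ K) (hR : 1 ≤ R) (T : Set ℕ) (v : ℕ → ℕ)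
    (hT : ∀ j ∈ T, 1 ≤ j) (hKT : K ∉ T) :
    volume {x | x ∈ ESet T v ∧ rcfDigit x K = R}
      ≤ ENNReal.ofReal (1024 / (R:ℝ)^2) * volume (ESet T v) := by
  have hRpos : (0:ℝ) < (R:ℝ)^2 := by
    have : (1:ℝ) ≤ (R:ℝ) := by exact_mod_cast hR
    positivity
  rcases Nat.lt_or_ge K 2 with hK2 | hK2
  · -- K = 1
    have hK1 : K = 1 := by omega
    subst hK1
    have hT2 : ∀ j ∈ T, 2 ≤ j := by
      intro j hj
      have h1 := hT j hj
      rcases Nat.lt_or_ge j 2 with h | h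
      · exfalso
        have : j = 1 := by omega
        subst this
        exact hKT hj
      · exact h
    calc volume {x | x ∈ ESet T v ∧ rcfDigit x 1 = R}
        ≤ ENNReal.ofReal (64 / (R:ℝ)^2) * volume (ESet T v) := main_one R hR T v hT2
      _ ≤ ENNReal.ofReal (1024 / (R:ℝ)^2) * volume (ESet T v) := by
          apply mul_le_mul_left
          apply ENNReal.ofReal_le_ofReal
          gcongr
          norm_num
  · -- K = m + 1, m ≥ 1
    set m : ℕ := K - 1 with hm
    have hKm : K = m + 1 := by omega
    have hm1 : 1 ≤ m := by omega
    set TB : Set ℕ := {i | 2 ≤ i ∧ i + m ∈ T} with hTB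
    set vB : ℕ → ℕ := fun i => v (i + m) with hvB
    have hBRle : volume {y | y ∈ ESet TB vB ∧ rcfDigit y 1 = R}
        ≤ ENNReal.ofReal (64 / (R:ℝ)^2) * volume (ESet TB vB) :=
      main_one R hR TB vB (fun i hi => hi.1)
    set B : Set ℝ := ESet TB vB with hB
    set BR : Set ℝ := {y | y ∈ ESet TB vB ∧ rcfDigit y 1 = R} with hBRdef
    have hBX : B ⊆ X := ESet_subset_X _ _
    have hBRX : BR ⊆ X := fun y hy => hy.1.1
    have hd3 : ∀ x : ℝ, rcfDigit x K = rcfDigit (gaussMap^[m] x) 1 := by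
      intro x
      have h := rcfDigit_shift x m 1 le_rfl
      rw [← h]
      congr 1
      omega
    have hcoreE : ∀ (w : Fin m → ℕ) (x : ℝ), x ∈ cylSet (List.ofFn w) →
        (x ∈ ESet T v ↔
          ((∀ j ∈ T, j ≤ m → (List.ofFn w).getD (j-1) 0 = v j) ∧ gaussMap^[m] x ∈ B)) := by
      intro w x hx
      have hxX : x ∈ X := hx.1
      have hlen : (List.ofFn w).length = m := List.length_ofFn
      have hd1 : ∀ j, 1 ≤ j → j ≤ m → rcfDigit x j = (List.ofFn w).getD (j-1) 0 := by
        intro j h1 h2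
        have hh := hx.2 (j-1) (by omega)
        have hj : (j - 1) + 1 = j := by omega
        rw [hj] at hh
        exact hh
      have hyX : gaussMap^[m] x ∈ X := iter_mem_X hxX m
      have hd2 : ∀ i, 1 ≤ i → rcfDigit x (i + m) = rcfDigit (gaussMap^[m] x) i :=
        fun i hi => rcfDigit_shift x m i hi
      constructor
      · rintro ⟨-, hE⟩
        refine ⟨fun j hj hjm => ?_, hyX, fun i hiB => ?_⟩
        · rw [← hd1 j (hT j hj) hjm]
          exact hE j hj
        · obtain ⟨hi2, hiT⟩ := hiB
          rw [← hd2 i (by omega)]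
          exact hE (i+m) hiT
      · rintro ⟨hok, -, hfut⟩
        refine ⟨hxX, fun j hj => ?_⟩
        rcases le_or_gt j m with hjm | hjm
        · rw [hd1 j (hT j hj) hjm]
          exact hok j hj hjm
        · have hj2 : m + 2 ≤ j := by
            rcases Nat.lt_or_ge j (m+2) with h | h
            · exfalso
              have hj1 : j = K := by omega
              rw [hj1] at hj
              exact hKT hj
            · exact h
          have hjm' : j - m + m = j := by omega
          have hiT : (j - m) ∈ TB := by
            refine ⟨by omega, ?_⟩
            rw [hjm']
            exact hj
          have hfv := hfut (j-m) hiT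
          rw [← hd2 (j-m) (by omega), hjm'] at hfv
          rw [hfv, hvB]
          simp only []
          rw [hjm']
    have hcoreE' : ∀ (w : Fin m → ℕ) (x : ℝ), x ∈ cylSet (List.ofFn w) →
        ((x ∈ ESet T v ∧ rcfDigit x K = R) ↔
          ((∀ j ∈ T, j ≤ m → (List.ofFn w).getD (j-1) 0 = v j) ∧ gaussMap^[m] x ∈ BR)) := by
      intro w x hx
      constructor
      · rintro ⟨hE, hKR⟩
        obtain ⟨hok, hBm⟩ := (hcoreE w x hx).1 hE
        refine ⟨hok, hBm, ?_⟩
        rw [← hd3 x]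
        exact hKR
      · rintro ⟨hok, hBm, h1⟩
        refine ⟨(hcoreE w x hx).2 ⟨hok, hBm⟩, ?_⟩
        rw [hd3 x]
        exact h1
    have hsplitE : ∀ (w : Fin m → ℕ), (∀ j ∈ T, j ≤ m → (List.ofFn w).getD (j-1) 0 = v j) →
        cylSet (List.ofFn w) ∩ ESet T v = cylSet (List.ofFn w) ∩ (gaussMap^[m]) ⁻¹' B := by
      intro w hok
      ext x
      simp only [Set.mem_inter_iff, Set.mem_preimage]
      constructor
      · rintro ⟨hc, hE⟩
        exact ⟨hc, ((hcoreE w x hc).1 hE).2⟩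
      · rintro ⟨hc, hpre⟩
        exact ⟨hc, (hcoreE w x hc).2 ⟨hok, hpre⟩⟩
    have hsplitE' : ∀ (w : Fin m → ℕ), (∀ j ∈ T, j ≤ m → (List.ofFn w).getD (j-1) 0 = v j) →
        cylSet (List.ofFn w) ∩ {x | x ∈ ESet T v ∧ rcfDigit x K = R}
          = cylSet (List.ofFn w) ∩ (gaussMap^[m]) ⁻¹' BR := by
      intro w hok
      ext x
      simp only [Set.mem_inter_iff, Set.mem_preimage, Set.mem_setOf_eq]
      constructor
      · rintro ⟨hc, hE⟩
        exact ⟨hc, ((hcoreE' w x hc).1 hE).2⟩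
      · rintro ⟨hc, hpre⟩
        exact ⟨hc, (hcoreE' w x hc).2 ⟨hok, hpre⟩⟩
    have hsplit0 : ∀ (w : Fin m → ℕ), ¬(∀ j ∈ T, j ≤ m → (List.ofFn w).getD (j-1) 0 = v j) →
        cylSet (List.ofFn w) ∩ ESet T v = ∅ := by
      intro w hok
      rw [Set.eq_empty_iff_forall_notMem]
      rintro x ⟨hxc, hxE⟩
      exact hok ((hcoreE w x hxc).1 hxE).1
    -- measurability
    have hmeasE : MeasurableSet (ESet T v) := measurableSet_ESet T v
    have hmeasE' : MeasurableSet {x | x ∈ ESet T v ∧ rcfDigit x K = R} := by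
      have heq : {x | x ∈ ESet T v ∧ rcfDigit x K = R}
          = ESet T v ∩ (fun x => rcfDigit x K) ⁻¹' {R} := by
        ext x
        simp [Set.mem_preimage]
      rw [heq]
      exact hmeasE.inter ((measurable_rcfDigit K) (measurableSet_singleton R))
    -- decompositions
    have hcoverE : ESet T v = ⋃ w : Fin m → ℕ, (cylSet (List.ofFn w) ∩ ESet T v) := by
      ext x
      constructor
      · intro hx
        exact Set.mem_iUnion.2 ⟨fun i => rcfDigit x (i.val+1), mem_cyl_self hx.1 m, hx⟩
      · intro hx
        obtain ⟨w, hw⟩ := Set.mem_iUnion.1 hx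
        exact hw.2
    have hcoverE' : {x | x ∈ ESet T v ∧ rcfDigit x K = R}
        = ⋃ w : Fin m → ℕ, (cylSet (List.ofFn w) ∩ {x | x ∈ ESet T v ∧ rcfDigit x K = R}) := by
      ext x
      constructor
      · intro hx
        exact Set.mem_iUnion.2 ⟨fun i => rcfDigit x (i.val+1), mem_cyl_self hx.1.1 m, hx⟩
      · intro hx
        obtain ⟨w, hw⟩ := Set.mem_iUnion.1 hx
        exact hw.2
    have hdisjE : Pairwise (Function.onFun Disjoint
        (fun w : Fin m → ℕ => cylSet (List.ofFn w) ∩ ESet T v)) :=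
      fun w w' hne => ((cyl_disjoint hne).mono Set.inter_subset_left Set.inter_subset_left)
    have hdisjE' : Pairwise (Function.onFun Disjoint
        (fun w : Fin m → ℕ => cylSet (List.ofFn w) ∩ {x | x ∈ ESet T v ∧ rcfDigit x K = R})) :=
      fun w w' hne => ((cyl_disjoint hne).mono Set.inter_subset_left Set.inter_subset_left)
    have hsumE : volume (ESet T v)
        = ∑' w : Fin m → ℕ, volume (cylSet (List.ofFn w) ∩ ESet T v) := by
      conv_lhs => rw [hcoverE]
      exact measure_iUnion hdisjE (fun w => (measurableSet_cylSet _).inter hmeasE)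
    have hsumE' : volume {x | x ∈ ESet T v ∧ rcfDigit x K = R}
        = ∑' w : Fin m → ℕ, volume (cylSet (List.ofFn w) ∩ {x | x ∈ ESet T v ∧ rcfDigit x K = R}) := by
      conv_lhs => rw [hcoverE']
      exact measure_iUnion hdisjE' (fun w => (measurableSet_cylSet _).inter hmeasE')
    -- per cylinder estimate
    have hperw : ∀ w : Fin m → ℕ,
        volume (cylSet (List.ofFn w) ∩ {x | x ∈ ESet T v ∧ rcfDigit x K = R})
          ≤ ENNReal.ofReal (1024 / (R:ℝ)^2) * volume (cylSet (List.ofFn w) ∩ ESet T v) := by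
      intro w
      by_cases hok : ∀ j ∈ T, j ≤ m → (List.ofFn w).getD (j-1) 0 = v j
      · by_cases hcyl0 : cylSet (List.ofFn w) = ∅
        · rw [hcyl0]
          simp
        · obtain ⟨x0, hx0⟩ := Set.nonempty_iff_ne_empty.2 hcyl0
          have hent := cyl_entries_pos hx0
          have hlen : (List.ofFn w).length = m := List.length_ofFn
          have hnenil : List.ofFn w ≠ [] := by
            intro h
            rw [h] at hlen
            simp at hlen
            omega
          rw [hsplitE' w hok, hsplitE w hok]
          have hup := dist_upper (List.ofFn w) hent hnenil hBRX
          have hlow := dist_lower (List.ofFn w) hent hnenil hBX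
          rw [hlen] at hup hlow
          calc volume (cylSet (List.ofFn w) ∩ (gaussMap^[m]) ⁻¹' BR)
              ≤ 4 * (volume (cylSet (List.ofFn w)) * volume BR) := hup
            _ ≤ 4 * (volume (cylSet (List.ofFn w)) * (ENNReal.ofReal (64/(R:ℝ)^2) * volume B)) :=
                mul_le_mul_right (mul_le_mul_right hBRle _) _
            _ = ENNReal.ofReal (64/(R:ℝ)^2) * (4 * (volume (cylSet (List.ofFn w)) * volume B)) := by
                ring
            _ ≤ ENNReal.ofReal (64/(R:ℝ)^2) * (4 * (4 * volume (cylSet (List.ofFn w) ∩ (gaussMap^[m]) ⁻¹' B))) := by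
                apply mul_le_mul_right
                exact mul_le_mul_right hlow _
            _ = (ENNReal.ofReal (64/(R:ℝ)^2) * 16) * volume (cylSet (List.ofFn w) ∩ (gaussMap^[m]) ⁻¹' B) := by
                ring
            _ = ENNReal.ofReal (1024 / (R:ℝ)^2) * volume (cylSet (List.ofFn w) ∩ (gaussMap^[m]) ⁻¹' B) := by
                congr 1
                rw [show (16:ℝ≥0∞) = ENNReal.ofReal (16:ℝ) by norm_num,
                  ← ENNReal.ofReal_mul (by positivity)]
                congr 1
                field_simp
                norm_num
      · have h0 : cylSet (List.ofFn w) ∩ ESet T v = ∅ := hsplit0 w hok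
        have h0' : cylSet (List.ofFn w) ∩ {x | x ∈ ESet T v ∧ rcfDigit x K = R} = ∅ := by
          rw [Set.eq_empty_iff_forall_notMem]
          rintro x ⟨hxc, hxE, -⟩
          rw [Set.eq_empty_iff_forall_notMem] at h0
          exact h0 x ⟨hxc, hxE⟩
        rw [h0']
        simp
    calc volume {x | x ∈ ESet T v ∧ rcfDigit x K = R}
        = ∑' w : Fin m → ℕ, volume (cylSet (List.ofFn w) ∩ {x | x ∈ ESet T v ∧ rcfDigit x K = R}) :=
          hsumE'
      _ ≤ ∑' w : Fin m → ℕ, ENNReal.ofReal (1024 / (R:ℝ)^2) * volume (cylSet (List.ofFn w) ∩ ESet T v) :=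
          ENNReal.tsum_le_tsum hperw
      _ = ENNReal.ofReal (1024 / (R:ℝ)^2) * ∑' w : Fin m → ℕ, volume (cylSet (List.ofFn w) ∩ ESet T v) :=
          ENNReal.tsum_mul_left
      _ = ENNReal.ofReal (1024 / (R:ℝ)^2) * volume (ESet T v) := by rw [← hsumE]

end RcfAux

open RcfAux in
/-- Conditional measure estimate for cylinder sets of regular continued fraction digits:
`λ(E(k₁…kₙ k_{n+1}; r₁…rₙ r)) ≪ (1/r²) · λ(E(k₁…kₙ; r₁…rₙ))`. -/
theorem rcf_cylinder_cond_le :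
    ∃ C : ℝ, 0 < C ∧ ∀ (n : ℕ) (k : Fin (n + 1) → ℕ) (r : Fin (n + 1) → ℕ),
      (∀ i, 0 < k i) → Function.Injective k → (∀ i, 0 < r i) →
      volume {x : ℝ | x ∈ Set.Ioo (0 : ℝ) 1 ∧ Irrational x ∧ ∀ i, rcfDigit x (k i) = r i}
        ≤ ENNReal.ofReal (C / (r (Fin.last n) : ℝ) ^ 2) *
          volume {x : ℝ | x ∈ Set.Ioo (0 : ℝ) 1 ∧ Irrational x ∧
            ∀ i : Fin n, rcfDigit x (k i.castSucc) = r i.castSucc} := by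
  classical
  refine ⟨1024, by norm_num, ?_⟩
  intro n k r hk hinj hr
  set T : Set ℕ := {j | ∃ i : Fin n, k i.castSucc = j} with hT
  set v : ℕ → ℕ := fun j =>
    if h : ∃ i : Fin n, k i.castSucc = j then r (h.choose).castSucc else 0 with hv
  have hval : ∀ i : Fin n, v (k i.castSucc) = r i.castSucc := by
    intro i
    have hex : ∃ i' : Fin n, k i'.castSucc = k i.castSucc := ⟨i, rfl⟩
    have hch : hex.choose = i := by
      have hspec := hex.choose_spec
      have := hinj hspec
      exact Fin.castSucc_injective n this
    rw [hv]
    simp only [dif_pos hex, hch]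
  have hsetR : {x : ℝ | x ∈ Set.Ioo (0 : ℝ) 1 ∧ Irrational x ∧
      ∀ i : Fin n, rcfDigit x (k i.castSucc) = r i.castSucc} = ESet T v := by
    ext x
    simp only [Set.mem_setOf_eq, ESet, X]
    constructor
    · rintro ⟨h1, h2, h3⟩
      refine ⟨⟨h1, h2⟩, ?_⟩
      rintro j ⟨i, rfl⟩
      rw [hval i]
      exact h3 i
    · rintro ⟨⟨h1, h2⟩, h3⟩
      refine ⟨h1, h2, fun i => ?_⟩
      have := h3 (k i.castSucc) ⟨i, rfl⟩
      rwa [hval i] at this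
  have hsetL : {x : ℝ | x ∈ Set.Ioo (0 : ℝ) 1 ∧ Irrational x ∧
      ∀ i : Fin (n+1), rcfDigit x (k i) = r i}
      = {x | x ∈ ESet T v ∧ rcfDigit x (k (Fin.last n)) = r (Fin.last n)} := by
    ext x
    simp only [Set.mem_setOf_eq, ESet, X]
    constructor
    · rintro ⟨h1, h2, h3⟩
      refine ⟨⟨⟨h1, h2⟩, ?_⟩, h3 (Fin.last n)⟩
      rintro j ⟨i, rfl⟩
      rw [hval i]
      exact h3 i.castSucc
    · rintro ⟨⟨⟨h1, h2⟩, h3⟩, h4⟩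
      refine ⟨h1, h2, fun i => ?_⟩
      induction i using Fin.lastCases with
      | last => exact h4
      | cast i =>
          have := h3 (k i.castSucc) ⟨i, rfl⟩
          rwa [hval i] at this
  rw [hsetR, hsetL]
  exact main_gen (k (Fin.last n)) (r (Fin.last n)) (hk (Fin.last n)) (hr (Fin.last n)) T v
    (by rintro j ⟨i, rfl⟩; exact hk i.castSucc)
    (by
      rintro ⟨i, heq⟩
      exact (Fin.castSucc_lt_last i).ne (hinj heq))
end

section
/- Let x ∈ (0,1) be irrational with regular continued fraction digits a_n(x) and negative continued fraction digits a'_n(x). For every integer k ≥ 1 and every integer j with 0 ≤ j < a_{2k+1}(x), setting N = a_1(x) + a_3(x) + ⋯ + a_{2k−1}(x) + j, one has ∑_{n=1}^{N} a'_n(x) = 2N + ∑_{i=1}^{k} a_{2i}(x). -/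
open MeasureTheory Filter Real

/-- The negative continued fraction map `T(y) = -1/y - ⌊-1/y⌋` (with `T 0 = 0`). -/
noncomputable def negT (y : ℝ) : ℝ := Int.fract (-1 / y)

/-- The `n`-th negative continued fraction digit `a'_n(x) = ⌈1 / T^{n-1}(1-x)⌉`. -/
noncomputable def negDigit (x : ℝ) (n : ℕ) : ℕ := (⌈1 / negT^[n - 1] (1 - x)⌉).toNat

lemma irrational_fract {v : ℝ} (hv : Irrational v) : Irrational (Int.fract v) :=
  hv.sub_intCast ⌊v⌋

lemma gaussMap_mem {z : ℝ} (hz : z ∈ Set.Ioo (0:ℝ) 1) (hi : Irrational z) :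
    gaussMap z ∈ Set.Ioo (0:ℝ) 1 ∧ Irrational (gaussMap z) := by
  have h1 : Irrational (1 / z) := by simpa [one_div] using hi.inv
  have hfi : Irrational (gaussMap z) := irrational_fract h1
  have hge : (0:ℝ) ≤ gaussMap z := Int.fract_nonneg _
  have hlt : gaussMap z < 1 := Int.fract_lt_one _
  exact ⟨⟨lt_of_le_of_ne hge (Ne.symm hfi.ne_zero), hlt⟩, hfi⟩

lemma gaussIter_mem {x : ℝ} (hx : x ∈ Set.Ioo (0:ℝ) 1) (hirr : Irrational x) (n : ℕ) :
    gaussMap^[n] x ∈ Set.Ioo (0:ℝ) 1 ∧ Irrational (gaussMap^[n] x) := by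
  induction n with
  | zero => exact ⟨hx, hirr⟩
  | succ n ih =>
      rw [Function.iterate_succ_apply']
      exact gaussMap_mem ih.1 ih.2

/-- Step of type "2": if `2 < u`, one negative-CF step on `1 - 1/u` gives digit `2`. -/
lemma neg_step_two {u : ℝ} (h2 : 2 < u) :
    negT (1 - 1/u) = 1 - 1/(u - 1) ∧ ⌈1/(1 - 1/u)⌉ = (2:ℤ) := by
  have hu0 : (0:ℝ) < u := by linarith
  have hune : u ≠ 0 := ne_of_gt hu0
  have hu1 : (1:ℝ) < u - 1 := by linarith
  have hdne : u - 1 ≠ 0 := by linarith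
  have ht0 : 0 < 1/(u-1) := by positivity
  have ht1 : 1/(u-1) < 1 := by rw [div_lt_one (by linarith)]; linarith
  have hne : 1 - 1/u ≠ 0 := by
    have : 1/u < 1 := by rw [div_lt_one hu0]; linarith
    linarith
  have hkey : 1/(1 - 1/u) = 1 + 1/(u-1) := by
    field_simp
    ring
  have hts : Int.fract (1/(u-1)) = 1/(u-1) := Int.fract_eq_self.2 ⟨le_of_lt ht0, ht1⟩
  constructor
  · have hrw : -1 / (1 - 1/u) = -(1/(u-1)) - 1 := by
      field_simp
      ring
    rw [negT, hrw, Int.fract_sub_one, Int.fract_neg (by rw [hts]; exact ne_of_gt ht0), hts]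
  · rw [hkey, Int.ceil_eq_iff]
    refine ⟨?_, ?_⟩
    · push_cast
      linarith
    · push_cast
      linarith

/-- Step of type "transition": if `1 < u < 2` irrational, one negative-CF step on `1 - 1/u`. -/
lemma neg_step_one {u : ℝ} (hu : Irrational u) (h1 : 1 < u) (h2 : u < 2) :
    negT (1 - 1/u) = 1 - gaussMap (gaussMap (1/u))
    ∧ ⌈1/(1 - 1/u)⌉ = ⌊1/(gaussMap (1/u))⌋ + 2 := by
  have hu0 : (0:ℝ) < u := by linarith
  have hune : u ≠ 0 := ne_of_gt hu0
  have hdne : u - 1 ≠ 0 := by linarith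
  have hfloor : ⌊u⌋ = 1 := by
    rw [Int.floor_eq_iff]
    refine ⟨?_, ?_⟩
    · push_cast; linarith
    · push_cast; linarith
  have hg1 : gaussMap (1/u) = u - 1 := by
    rw [gaussMap, one_div_one_div, Int.fract, hfloor]
    norm_num
  set v : ℝ := 1/(u-1) with hv
  have hvirr : Irrational v := by
    have h' : Irrational (u - 1) := by simpa using hu.sub_intCast 1
    simpa [hv, one_div] using h'.inv
  have hv1 : 1 < v := by
    rw [hv, lt_div_iff₀ (by linarith)]; linarith
  have hb := Int.floor_le v
  have hb' := Int.lt_floor_add_one v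
  have hbne : (⌊v⌋ : ℝ) ≠ v := fun h => hvirr.ne_int ⌊v⌋ h.symm
  have hblt : (⌊v⌋ : ℝ) < v := lt_of_le_of_ne hb hbne
  have hne : 1 - 1/u ≠ 0 := by
    have : 1/u < 1 := by rw [div_lt_one hu0]; linarith
    linarith
  have hkey : 1/(1 - 1/u) = 1 + v := by
    rw [hv]; field_simp; ring
  have hgg : gaussMap (gaussMap (1/u)) = Int.fract v := by
    rw [hg1, gaussMap, hv]
  have hfVne : Int.fract v ≠ 0 := (irrational_fract hvirr).ne_zero
  constructor
  · have hrw : -1 / (1 - 1/u) = -v - 1 := by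
      rw [hv]; field_simp; ring
    rw [negT, hrw, Int.fract_sub_one]
    rw [show -v = -(v) from rfl, Int.fract_neg hfVne, hgg]
  · rw [hkey, hg1, ← hv, Int.ceil_eq_iff]
    refine ⟨?_, ?_⟩
    · push_cast
      linarith
    · push_cast
      linarith

private abbrev recodingP (x : ℝ) (k j : ℕ) : Prop :=
  negT^[(∑ i ∈ Finset.Icc 1 k, rcfDigit x (2*i-1)) + j] (1 - x)
      = 1 - 1/(1/(gaussMap^[2*k] x) - j)
  ∧ ∑ n ∈ Finset.Icc 1 ((∑ i ∈ Finset.Icc 1 k, rcfDigit x (2*i-1)) + j), negDigit x n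
      = 2*((∑ i ∈ Finset.Icc 1 k, rcfDigit x (2*i-1)) + j)
        + ∑ i ∈ Finset.Icc 1 k, rcfDigit x (2*i)

private lemma recoding_main (x : ℝ) (hx : x ∈ Set.Ioo (0:ℝ) 1) (hirr : Irrational x) :
    ∀ k j, j < rcfDigit x (2*k+1) → recodingP x k j := by
  have hUirr : ∀ k, Irrational (1/(gaussMap^[2*k] x)) := fun k => by
    simpa [one_div] using (gaussIter_mem hx hirr (2*k)).2.inv
  have hUfloor : ∀ k, (⌊1/(gaussMap^[2*k] x)⌋ : ℤ) = (rcfDigit x (2*k+1) : ℤ) ∧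
      1 ≤ ⌊1/(gaussMap^[2*k] x)⌋ := by
    intro k
    have hw := gaussIter_mem hx hirr (2*k)
    have h1 : (1:ℝ) < 1/(gaussMap^[2*k] x) := by
      rw [lt_div_iff₀ hw.1.1]; simpa using hw.1.2
    have hfl : 1 ≤ ⌊1/(gaussMap^[2*k] x)⌋ := by
      rw [Int.le_floor]; push_cast; linarith
    refine ⟨?_, hfl⟩
    have h2 : rcfDigit x (2*k+1) = (⌊1/(gaussMap^[2*k] x)⌋).toNat := by
      simp [rcfDigit]
    rw [h2, Int.toNat_of_nonneg (by linarith)]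
  have hUgtfloor : ∀ k, ((rcfDigit x (2*k+1) : ℝ)) < 1/(gaussMap^[2*k] x) := by
    intro k
    have h := (hUfloor k).1
    have hb : ((⌊1/(gaussMap^[2*k] x)⌋ : ℤ) : ℝ) < 1/(gaussMap^[2*k] x) :=
      lt_of_le_of_ne (Int.floor_le _) (fun hEq => (hUirr k).ne_int _ hEq.symm)
    rw [h] at hb
    push_cast at hb
    exact hb
  have hUlt : ∀ k, 1/(gaussMap^[2*k] x) < (rcfDigit x (2*k+1) : ℝ) + 1 := by
    intro k
    have h := (hUfloor k).1
    have hb := Int.lt_floor_add_one (1/(gaussMap^[2*k] x))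
    rw [h] at hb
    push_cast at hb
    exact hb
  -- within-block step
  have hstep : ∀ k j, j + 1 < rcfDigit x (2*k+1) → recodingP x k j → recodingP x k (j+1) := by
    intro k j hj h
    obtain ⟨horb, hsum⟩ := h
    set U : ℝ := 1/(gaussMap^[2*k] x) with hU
    have hgt : (2:ℝ) < U - j := by
      have h1 := hUgtfloor k
      have h2 : (j:ℝ) + 2 ≤ (rcfDigit x (2*k+1) : ℝ) := by exact_mod_cast hj
      rw [← hU] at h1
      linarith
    have hstep2 := neg_step_two hgt
    set N := (∑ i ∈ Finset.Icc 1 k, rcfDigit x (2*i-1)) + j with hN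
    have horb' : negT^[N+1] (1 - x) = 1 - 1/(U - ((j+1 : ℕ) : ℝ)) := by
      rw [Function.iterate_succ_apply', horb, hstep2.1]
      push_cast
      ring_nf
    have hdig : negDigit x (N+1) = 2 := by
      have h1 : negDigit x (N+1) = (⌈1 / negT^[N] (1-x)⌉).toNat := by
        simp [negDigit]
      rw [h1, horb, hstep2.2]
      rfl
    have hidx : (∑ i ∈ Finset.Icc 1 k, rcfDigit x (2*i-1)) + (j+1) = N + 1 := by omega
    refine ⟨?_, ?_⟩
    · rw [hidx, horb']
    · rw [hidx, Finset.sum_Icc_succ_top (by omega : 1 ≤ N + 1), hdig, hsum]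
      omega
  -- block transition
  have htrans : ∀ k, recodingP x k (rcfDigit x (2*k+1) - 1) → recodingP x (k+1) 0 := by
    intro k h
    obtain ⟨horb, hsum⟩ := h
    set U : ℝ := 1/(gaussMap^[2*k] x) with hU
    set a := rcfDigit x (2*k+1) with ha
    have ha1 : 1 ≤ a := by
      have h1 := (hUfloor k).1
      have h2 := (hUfloor k).2
      omega
    set u : ℝ := U - ((a - 1 : ℕ) : ℝ) with hu
    have hcast : ((a - 1 : ℕ) : ℝ) = (a : ℝ) - 1 := by
      push_cast [ha1]; ring
    have hu1 : 1 < u := by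
      have h1 := hUgtfloor k
      rw [← hU, ← ha] at h1
      rw [hu, hcast]; linarith
    have hu2 : u < 2 := by
      have h1 := hUlt k
      rw [← hU, ← ha] at h1
      rw [hu, hcast]; linarith
    have huirr : Irrational u := by
      rw [hu, hU]
      exact (hUirr k).sub_natCast _
    have hstep1 := neg_step_one huirr hu1 hu2
    set N := (∑ i ∈ Finset.Icc 1 k, rcfDigit x (2*i-1)) + (a - 1) with hN
    have hg1 : gaussMap (1/u) = gaussMap^[2*k+1] x := by
      rw [gaussMap, one_div_one_div, hu, Int.fract_sub_natCast, hU,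
        Function.iterate_succ_apply']
      rfl
    have hgg : gaussMap (gaussMap (1/u)) = gaussMap^[2*(k+1)] x := by
      rw [hg1, show 2*(k+1) = (2*k+1)+1 from by ring, Function.iterate_succ_apply',
        Function.iterate_succ_apply', Function.iterate_succ_apply' gaussMap (2*k) x]
    have horb' : negT^[N+1] (1 - x) = 1 - gaussMap^[2*(k+1)] x := by
      rw [Function.iterate_succ_apply', horb, hstep1.1, hgg]
    have hb := gaussIter_mem hx hirr (2*k+1)
    have hbfl : (1:ℤ) ≤ ⌊1/(gaussMap^[2*k+1] x)⌋ := by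
      rw [Int.le_floor]
      have h1 : (1:ℝ) < 1/(gaussMap^[2*k+1] x) := by
        rw [lt_div_iff₀ hb.1.1]; simpa using hb.1.2
      push_cast; linarith
    have hidx2 : 2*(k+1) - 1 = 2*k+1 := by omega
    have hrcf2 : (rcfDigit x (2*(k+1)) : ℤ) = ⌊1/(gaussMap^[2*k+1] x)⌋ := by
      rw [rcfDigit, hidx2, Int.toNat_of_nonneg (by linarith)]
    have hdig : negDigit x (N+1) = rcfDigit x (2*(k+1)) + 2 := by
      have h1 : negDigit x (N+1) = (⌈1 / negT^[N] (1-x)⌉).toNat := by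
        simp [negDigit]
      rw [h1, horb, hstep1.2, hg1]
      omega
    have hSsucc : (∑ i ∈ Finset.Icc 1 (k+1), rcfDigit x (2*i-1))
        = (∑ i ∈ Finset.Icc 1 k, rcfDigit x (2*i-1)) + a := by
      rw [Finset.sum_Icc_succ_top (by omega : 1 ≤ k + 1), ha, hidx2]
    have hBsucc : (∑ i ∈ Finset.Icc 1 (k+1), rcfDigit x (2*i))
        = (∑ i ∈ Finset.Icc 1 k, rcfDigit x (2*i)) + rcfDigit x (2*(k+1)) := by
      rw [Finset.sum_Icc_succ_top (by omega : 1 ≤ k + 1)]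
    have hidx : (∑ i ∈ Finset.Icc 1 (k+1), rcfDigit x (2*i-1)) + 0 = N + 1 := by
      rw [hSsucc]; omega
    refine ⟨?_, ?_⟩
    · rw [hidx, horb', Nat.cast_zero, sub_zero, one_div_one_div]
    · rw [hidx, Finset.sum_Icc_succ_top (by omega : 1 ≤ N + 1), hdig, hsum, hBsucc]
      omega
  -- base case
  have hbase : recodingP x 0 0 := by
    constructor
    · simp [one_div_one_div]
    · simp
  -- fill a block from its start
  have hfill : ∀ k, recodingP x k 0 → ∀ j, j < rcfDigit x (2*k+1) → recodingP x k j := by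
    intro k h0 j
    induction j with
    | zero => intro _; exact h0
    | succ j ih => intro hj; exact hstep k j hj (ih (by omega))
  have h0all : ∀ k, recodingP x k 0 := by
    intro k
    induction k with
    | zero => exact hbase
    | succ k ih =>
        have ha1 : 1 ≤ rcfDigit x (2*k+1) := by
          have h1 := (hUfloor k).1
          have h2 := (hUfloor k).2
          omega
        exact htrans k (hfill k ih (rcfDigit x (2*k+1) - 1) (by omega))
  intro k j hj
  exact hfill k (h0all k) j hj

/-- Recoding identity: with `N = a₁ + a₃ + ⋯ + a_{2k-1} + j` (`0 ≤ j < a_{2k+1}`),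
the sum of the first `N` negative digits equals `2N + ∑_{i=1}^k a_{2i}`. -/
theorem negDigit_sum_recoding (x : ℝ) (hx : x ∈ Set.Ioo (0 : ℝ) 1) (hirr : Irrational x)
    (k : ℕ) (hk : 1 ≤ k) (j : ℕ) (hj : j < rcfDigit x (2 * k + 1)) :
    ∑ n ∈ Finset.Icc 1 ((∑ i ∈ Finset.Icc 1 k, rcfDigit x (2 * i - 1)) + j), negDigit x n
      = 2 * ((∑ i ∈ Finset.Icc 1 k, rcfDigit x (2 * i - 1)) + j) +
        ∑ i ∈ Finset.Icc 1 k, rcfDigit x (2 * i) := by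
  exact (recoding_main x hx hirr k j hj).2
end

section
/- Let x ∈ (0,1) be irrational. For every integer k ≥ 1 and every integer j with 0 ≤ j < a_{2k+1}(x), setting N = a_1(x) + a_3(x) + ⋯ + a_{2k−1}(x) + j, the denominator of the N-th negative continued fraction convergent satisfies Q_N(x) = q_{2k−1}(x) + (j+1) · q_{2k}(x). -/
open MeasureTheory Filter Real

/-- Numerators of negative continued fraction convergents, shifted so that
`negP x (n+1) = P_n` with `P_{-1} = negP x 0 = 1`, `P_0 = negP x 1 = 1`,
`P_n = a'_n P_{n-1} - P_{n-2}`. -/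
noncomputable def negP (x : ℝ) : ℕ → ℤ
  | 0 => 1
  | 1 => 1
  | n + 2 => negDigit x (n + 1) * negP x (n + 1) - negP x n

/-- Denominators of negative continued fraction convergents, shifted so that
`negQ x (n+1) = Q_n` with `Q_{-1} = negQ x 0 = 0`, `Q_0 = negQ x 1 = 1`,
`Q_n = a'_n Q_{n-1} - Q_{n-2}`. -/
noncomputable def negQ (x : ℝ) : ℕ → ℤ
  | 0 => 0
  | 1 => 1
  | n + 2 => negDigit x (n + 1) * negQ x (n + 1) - negQ x n

/-- Denominators of regular continued fraction convergents, shifted so that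
`regQ x (n+1) = q_n` with `q_{-1} = regQ x 0 = 0`, `q_0 = regQ x 1 = 1`,
`q_n = a_n q_{n-1} + q_{n-2}`. -/
noncomputable def regQ (x : ℝ) : ℕ → ℤ
  | 0 => 0
  | 1 => 1
  | n + 2 => rcfDigit x (n + 1) * regQ x (n + 1) + regQ x n

lemma irr_fract {r : ℝ} (h : Irrational r) : Irrational (Int.fract r) := by
  simpa [Int.fract, sub_eq_add_neg] using h.sub_intCast ⌊r⌋

lemma fract_pos {r : ℝ} (h : Irrational r) : 0 < Int.fract r := by
  rcases (Int.fract_nonneg r).lt_or_eq with h' | h'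
  · exact h'
  · exact absurd ⟨(0:ℚ), by simpa using h'⟩ (irr_fract h)

lemma gauss_facts {y : ℝ} (hy : y ∈ Set.Ioo (0:ℝ) 1) (h : Irrational y) :
    gaussMap y ∈ Set.Ioo (0:ℝ) 1 ∧ Irrational (gaussMap y) ∧
      ((⌊1/y⌋ : ℝ) + gaussMap y = 1 / y) ∧ 1 ≤ ⌊1/y⌋ := by
  have hinv : Irrational (1 / y) := by simpa [one_div] using h.inv
  have h1 : 1 < 1 / y := by
    rw [lt_div_iff₀ hy.1]; simpa using hy.2
  refine ⟨⟨fract_pos hinv, Int.fract_lt_one _⟩, irr_fract hinv, ?_, ?_⟩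
  · exact Int.floor_add_fract _
  · exact Int.le_floor.mpr (by exact_mod_cast h1.le)

lemma iter_facts {x : ℝ} (hx : x ∈ Set.Ioo (0:ℝ) 1) (h : Irrational x) (m : ℕ) :
    gaussMap^[m] x ∈ Set.Ioo (0:ℝ) 1 ∧ Irrational (gaussMap^[m] x) := by
  induction m with
  | zero => exact ⟨hx, h⟩
  | succ m ih =>
      rw [Function.iterate_succ_apply']
      exact ⟨(gauss_facts ih.1 ih.2).1, (gauss_facts ih.1 ih.2).2.1⟩

/-- Key single-step computation for the negative CF map. -/
lemma negT_step {t : ℝ} (ht : 1 < t) (hirr : Irrational t) :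
    negT (1 - 1/t) = 1 - Int.fract (1/(t-1)) ∧ ⌈1/(1 - 1/t)⌉ = ⌊1/(t-1)⌋ + 2 := by
  have ht0 : (0:ℝ) < t := lt_trans one_pos ht
  have ht1 : (0:ℝ) < t - 1 := by linarith
  have hne : (1:ℝ) - 1/t ≠ 0 := by
    have : 1/t < 1 := by rw [div_lt_one ht0]; exact ht
    linarith
  have key : 1/(1 - 1/t) = 1 + 1/(t-1) := by
    field_simp
    ring
  have hirr1 : Irrational (1/(t-1)) := by
    have : Irrational (t - (1:ℤ)) := hirr.sub_intCast 1
    simpa [one_div] using this.inv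
  have hfr : Int.fract (1 + 1/(t-1)) = Int.fract (1/(t-1)) := by
    simpa using Int.fract_intCast_add 1 (1/(t-1))
  have hfrne : Int.fract (1 + 1/(t-1)) ≠ 0 := by
    rw [hfr]; exact (fract_pos hirr1).ne'
  constructor
  · rw [negT, neg_div, key, Int.fract_neg hfrne, hfr]
  · rw [key]
    have hs0 : 0 < Int.fract (1/(t-1)) := fract_pos hirr1
    have hs1 : Int.fract (1/(t-1)) < 1 := Int.fract_lt_one _
    have hsplit : 1/(t-1) = (⌊1/(t-1)⌋ : ℝ) + Int.fract (1/(t-1)) := (Int.floor_add_fract _).symm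
    have hfl : (⌊1/(t-1)⌋ : ℝ) < 1/(t-1) :=
      lt_of_le_of_ne (Int.floor_le _) (Ne.symm (hirr1.ne_int _))
    have hfu : 1/(t-1) < (⌊1/(t-1)⌋ : ℝ) + 1 := Int.lt_floor_add_one _
    rw [Int.ceil_eq_iff]
    constructor
    · push_cast; linarith
    · push_cast; linarith

noncomputable def Ssum (x : ℝ) (k : ℕ) : ℕ := ∑ i ∈ Finset.Icc 1 k, rcfDigit x (2 * i - 1)

def NegInv (x : ℝ) (k j : ℕ) : Prop :=
  negT^[Ssum x k + j] (1 - x)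
    = 1 - 1/((rcfDigit x (2*k+1) : ℝ) - j + gaussMap (gaussMap^[2*k] x))
  ∧ negQ x (Ssum x k + j) = regQ x (2*k) + j * regQ x (2*k+1)
  ∧ negQ x (Ssum x k + j + 1) = regQ x (2*k) + (j+1) * regQ x (2*k+1)

lemma digit_eq {x : ℝ} (m : ℕ) : rcfDigit x (m+1) = (⌊1 / gaussMap^[m] x⌋).toNat := by
  simp [rcfDigit]

lemma digit_cast {x : ℝ} (hx : x ∈ Set.Ioo (0:ℝ) 1) (hirr : Irrational x) (m : ℕ) :
    ((rcfDigit x (m+1) : ℤ) = ⌊1 / gaussMap^[m] x⌋) ∧ 1 ≤ rcfDigit x (m+1) := by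
  obtain ⟨hu, hiu⟩ := iter_facts hx hirr m
  have h1 := (gauss_facts hu hiu).2.2.2
  rw [digit_eq]
  constructor
  · exact Int.toNat_of_nonneg (le_trans Int.one_nonneg h1)
  · omega

lemma inner_step {x : ℝ} (hx : x ∈ Set.Ioo (0:ℝ) 1) (hirr : Irrational x) (k j : ℕ)
    (hj : j + 1 < rcfDigit x (2*k+1)) (H : NegInv x k j) : NegInv x k (j+1) := by
  obtain ⟨hu, hiu⟩ := iter_facts hx hirr (2*k)
  obtain ⟨hg, hig, -, -⟩ := gauss_facts hu hiu
  set g := gaussMap (gaussMap^[2*k] x) with hgdef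
  set a := rcfDigit x (2*k+1) with hadef
  set t : ℝ := (a : ℝ) - j + g with htdef
  have haj : (j:ℝ) + 2 ≤ (a:ℝ) := by exact_mod_cast hj
  have ht : 1 < t := by simp only [htdef]; nlinarith [hg.1]
  have hirrt : Irrational t := by
    have h := hig.intCast_add ((a:ℤ) - j)
    have he : (((a:ℤ) - (j:ℤ) : ℤ) : ℝ) + g = t := by rw [htdef]; push_cast; ring
    rwa [he] at h
  obtain ⟨hT, hC⟩ := negT_step ht hirrt
  have ht1 : t - 1 = (a:ℝ) - (j+1) + g := by push_cast; ring
  have htm : (1:ℝ) < t - 1 := by rw [ht1]; nlinarith [hg.1]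
  have hmem : 0 ≤ 1/(t-1) ∧ 1/(t-1) < 1 := by
    constructor
    · positivity
    · rw [div_lt_one (by linarith)]; linarith
  have hfr : Int.fract (1/(t-1)) = 1/(t-1) := Int.fract_eq_self.mpr hmem
  have hfl : ⌊1/(t-1)⌋ = 0 := by
    rw [Int.floor_eq_zero_iff]; exact ⟨hmem.1, hmem.2⟩
  have horb : negT^[Ssum x k + (j+1)] (1 - x) = 1 - 1/(t-1) := by
    have : Ssum x k + (j+1) = (Ssum x k + j) + 1 := by omega
    rw [this, Function.iterate_succ_apply', H.1, ← htdef]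
    · rw [hT, hfr]
  have hdig : negDigit x (Ssum x k + j + 1) = 2 := by
    rw [negDigit]
    have : Ssum x k + j + 1 - 1 = Ssum x k + j := by omega
    rw [this, H.1, ← htdef, hC, hfl]
    rfl
  refine ⟨?_, ?_, ?_⟩
  · rw [horb, ht1]; push_cast [hadef, hgdef]; ring_nf
  · have := H.2.2
    have hidx : Ssum x k + (j+1) = Ssum x k + j + 1 := by omega
    rw [hidx, this]; push_cast; ring
  · have hidx : Ssum x k + (j+1) + 1 = (Ssum x k + j) + 2 := by omega
    rw [hidx]
    show (negDigit x ((Ssum x k + j) + 1) : ℤ) * negQ x ((Ssum x k + j) + 1) - negQ x (Ssum x k + j) = _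
    rw [hdig, H.2.1, H.2.2]
    push_cast; ring

lemma base_case {x : ℝ} (hx : x ∈ Set.Ioo (0:ℝ) 1) (hirr : Irrational x) : NegInv x 0 0 := by
  have hS : Ssum x 0 = 0 := by simp [Ssum]
  obtain ⟨-, -, hid, -⟩ := gauss_facts hx hirr
  have hd := (digit_cast hx hirr 0).1
  refine ⟨?_, ?_, ?_⟩
  · rw [hS]
    simp only [Function.iterate_zero_apply, Nat.cast_zero, sub_zero, Nat.mul_zero,
      Nat.zero_add]
    have : ((rcfDigit x 1 : ℝ)) + gaussMap x = 1 / x := by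
      rw [show ((rcfDigit x 1 : ℝ)) = ((rcfDigit x 1 : ℤ) : ℝ) by push_cast; ring, hd]
      simpa using hid
    rw [this]
    rw [one_div_one_div]
  · rw [hS]; show (0:ℤ) = regQ x 0 + 0 * regQ x 1; simp [regQ]
  · rw [hS]; show (1:ℤ) = regQ x 0 + (0+1) * regQ x 1; simp [regQ]

lemma block_step {x : ℝ} (hx : x ∈ Set.Ioo (0:ℝ) 1) (hirr : Irrational x) (k : ℕ)
    (H : NegInv x k (rcfDigit x (2*k+1) - 1)) : NegInv x (k+1) 0 := by
  obtain ⟨hu, hiu⟩ := iter_facts hx hirr (2*k)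
  obtain ⟨hg, hig, -, -⟩ := gauss_facts hu hiu
  set g := gaussMap (gaussMap^[2*k] x) with hgdef
  have hg21 : g = gaussMap^[2*k+1] x := by
    rw [hgdef, ← Function.iterate_succ_apply' gaussMap (2*k) x]
  obtain ⟨hv, hiv⟩ := iter_facts hx hirr (2*k+2)
  have hv22 : gaussMap^[2*k+2] x = gaussMap g := by
    rw [hg21, Function.iterate_succ_apply' gaussMap (2*k+1) x]
  set a := rcfDigit x (2*k+1) with hadef
  have ha1 : 1 ≤ a := (digit_cast hx hirr (2*k)).2
  obtain ⟨b, hb⟩ : ∃ b, a = b + 1 := ⟨a - 1, by omega⟩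
  -- the point after S_k + b steps
  have Hb := H
  rw [show a - 1 = b by omega] at Hb
  set t : ℝ := (a : ℝ) - b + g with htdef
  have htg : t = 1 + g := by rw [htdef, hb]; push_cast; ring
  have ht : 1 < t := by rw [htg]; linarith [hg.1]
  have hirrt : Irrational t := by
    have h := hig.intCast_add 1
    rwa [show ((1:ℤ):ℝ) + g = t by rw [htg]; push_cast; ring] at h
  obtain ⟨hT, hC⟩ := negT_step ht hirrt
  have ht1 : t - 1 = g := by rw [htg]; ring
  -- digit 2k+2
  have hd2 := digit_cast hx hirr (2*k+1)
  have hd2' : (⌊1/(t-1)⌋ : ℤ) = (rcfDigit x (2*k+2) : ℤ) := by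
    rw [ht1, hg21, hd2.1]
  -- digit 2k+3 relation for the new point
  have hd3 := digit_cast hx hirr (2*k+2)
  obtain ⟨-, -, hid3, -⟩ := gauss_facts hv hiv
  have hSsucc : Ssum x (k+1) = Ssum x k + a := by
    rw [Ssum, Ssum, Finset.sum_Icc_succ_top (by omega : 1 ≤ k+1)]
    congr 1
  have horb : negT^[Ssum x (k+1) + 0] (1 - x) = 1 - gaussMap^[2*k+2] x := by
    rw [hSsucc, show Ssum x k + a + 0 = (Ssum x k + b) + 1 by omega,
      Function.iterate_succ_apply', Hb.1, ← hadef, ← hgdef, ← htdef, hT, ht1]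
    rw [hv22, hg21]
    rfl
  have hdig : negDigit x (Ssum x k + b + 1) = rcfDigit x (2*k+2) + 2 := by
    rw [negDigit, show Ssum x k + b + 1 - 1 = Ssum x k + b by omega, Hb.1,
      ← hadef, ← hgdef, ← htdef, hC]
    have : ⌊1/(t-1)⌋ = (rcfDigit x (2*k+2) : ℤ) := hd2'
    rw [this]
    omega
  have hreg2 : regQ x (2*k+2) = (a:ℤ) * regQ x (2*k+1) + regQ x (2*k) := by
    show regQ x ((2*k)+2) = _
    rw [regQ]
  have hreg3 : regQ x (2*k+3) = (rcfDigit x (2*k+2) : ℤ) * regQ x (2*k+2) + regQ x (2*k+1) := by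
    show regQ x ((2*k+1)+2) = _
    rw [regQ]
  refine ⟨?_, ?_, ?_⟩
  · rw [horb]
    have hval : ((rcfDigit x (2*(k+1)+1) : ℝ)) + gaussMap (gaussMap^[2*(k+1)] x)
        = 1 / (gaussMap^[2*k+2] x) := by
      rw [show 2*(k+1) = 2*k+2 by ring]
      rw [show ((rcfDigit x (2*k+3) : ℝ)) = ((rcfDigit x (2*k+3) : ℤ) : ℝ) by push_cast; ring,
        show (2*k+3) = (2*k+2)+1 by ring, hd3.1]
      simpa using hid3
    rw [Nat.cast_zero, sub_zero, hval, one_div_one_div]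
  · rw [hSsucc, show Ssum x k + a + 0 = Ssum x k + b + 1 by omega, Hb.2.2]
    rw [show 2*(k+1) = 2*k+2 by ring, hreg2]
    push_cast [hb]; ring
  · rw [hSsucc, show Ssum x k + a + 1 = (Ssum x k + b) + 2 by omega]
    show (negDigit x ((Ssum x k + b) + 1) : ℤ) * negQ x ((Ssum x k + b) + 1) - negQ x (Ssum x k + b) = _
    rw [hdig, Hb.2.1, Hb.2.2,
      show 2*(k+1)+1 = 2*k+3 by ring, show 2*(k+1) = 2*k+2 by ring, hreg3, hreg2]
    push_cast [hb]; ring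

lemma main_inv {x : ℝ} (hx : x ∈ Set.Ioo (0:ℝ) 1) (hirr : Irrational x) :
    ∀ k j : ℕ, j < rcfDigit x (2*k+1) → NegInv x k j := by
  intro k
  induction k with
  | zero =>
      intro j
      induction j with
      | zero => intro _; exact base_case hx hirr
      | succ j ih =>
          intro hj
          exact inner_step hx hirr 0 j hj (ih (by omega))
  | succ k ihk =>
      have hbase : NegInv x (k+1) 0 := by
        have ha1 : 1 ≤ rcfDigit x (2*k+1) := (digit_cast hx hirr (2*k)).2
        exact block_step hx hirr k (ihk _ (by omega))
      intro j
      induction j with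
      | zero => intro _; exact hbase
      | succ j ih =>
          intro hj
          exact inner_step hx hirr (k+1) j hj (ih (by omega))

/-- With `N = a₁ + a₃ + ⋯ + a_{2k-1} + j` (`0 ≤ j < a_{2k+1}`), the negative
convergent denominator satisfies `Q_N = q_{2k-1} + (j+1) q_{2k}`. -/
theorem negQ_eq_regQ_combination (x : ℝ) (hx : x ∈ Set.Ioo (0 : ℝ) 1) (hirr : Irrational x)
    (k : ℕ) (hk : 1 ≤ k) (j : ℕ) (hj : j < rcfDigit x (2 * k + 1)) :
    negQ x ((∑ i ∈ Finset.Icc 1 k, rcfDigit x (2 * i - 1)) + j + 1)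
      = regQ x (2 * k) + (j + 1) * regQ x (2 * k + 1) := by
  have h := (main_inv hx hirr k j hj).2.2
  rw [Ssum] at h
  exact h
end
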